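/- Let l : List ℤ have length n ≥ 1 and suppose that for every index i < n, either l[i] is strictly less than every later element of l, or l[i] is strictly greater than every later element of l. Then qcost l = n*(n+1)/2 - 1. -/

import Mathlib

/-- Cost of the paper's simple QuickSort: each call on a list of length `N ≥ 2`
costs `N`, plus the cost of recursive calls on the strict-left and strict-right
partitions of the tail around the pivot `l.head!`. -/
def qcost (l : List ℤ) : ℕ :=
  if _h : l.length ≤ 1 then 0
  else
    l.length + qcost (l.tail.filter (· < l.head!)) + qcost (l.tail.filter (· > l.head!))
termination_by l.length
decreasing_by
  · calc (l.tail.filter (· < l.head!)).length ≤ l.tail.length := List.length_filter_le _ _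
      _ < l.length := by rw [List.length_tail]; omega
  · calc (l.tail.filter (· > l.head!)).length ≤ l.tail.length := List.length_filter_le _ _
      _ < l.length := by rw [List.length_tail]; omega

lemma qcost_small (l : List ℤ) (h : l.length ≤ 1) : qcost l = 0 := by
  rw [qcost]; simp [h]

lemma qcost_nil : qcost [] = 0 := qcost_small _ (by simp)

lemma tri_step (n : ℕ) (h : 2 ≤ n) :
    (n - 1) * (n - 1 + 1) / 2 + n = n * (n + 1) / 2 ∧ 1 ≤ (n - 1) * (n - 1 + 1) / 2 := by
  cases n with
  | zero => omega
  | succ m =>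
    simp only [Nat.succ_sub_one]
    obtain ⟨k, hk⟩ := Nat.even_mul_succ_self m
    have e1 : m * (m + 1) = 2 * k := by omega
    have e2 : (m + 1) * (m + 1 + 1) = m * (m + 1) + 2 * (m + 1) := by ring
    have e3 : 1 * 2 ≤ m * (m + 1) := Nat.mul_le_mul (by omega) (by omega)
    omega

lemma qcost_aux : ∀ n (l : List ℤ), l.length = n → 1 ≤ n →
    (∀ i < n, (∀ j, i < j → j < n → l[i]! < l[j]!) ∨
              (∀ j, i < j → j < n → l[j]! < l[i]!)) →
    qcost l = n * (n + 1) / 2 - 1 := by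
  intro n
  induction n using Nat.strong_induction_on with
  | _ n ih =>
    intro l hl hn hext
    match l, hl with
    | [], hl => simp at hl; omega
    | a :: t, hl =>
    rcases Nat.lt_or_ge n 2 with h2 | h2
    · interval_cases n
      · rw [qcost_small _ (by omega)]
    · have ht : 1 ≤ t.length := by simp at hl; omega
      have hlt : ∀ i : ℕ, i < t.length → i + 1 < (a :: t).length := by
        simp only [List.length_cons]; omega
      have h1 : (a :: t)[0]! = a := by
        rw [getElem!_pos (a :: t) 0 (by simp)]; simp
      have hidx : ∀ i : ℕ, i < t.length → (a :: t)[i+1]! = t[i]! := by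
        intro i hi
        rw [getElem!_pos (a :: t) (i+1) (hlt i hi), getElem!_pos t i hi,
          List.getElem_cons_succ]
      have htlen : t.length = n - 1 := by simp at hl; omega
      have hextt : ∀ i < n - 1, (∀ j, i < j → j < n - 1 → t[i]! < t[j]!) ∨
              (∀ j, i < j → j < n - 1 → t[j]! < t[i]!) := by
        intro i hi
        rcases hext (i+1) (by omega) with h | h
        · left; intro j hij hj
          have := h (j+1) (by omega) (by omega)
          rwa [hidx i (by omega), hidx j (by omega)] at this
        · right; intro j hij hj
          have := h (j+1) (by omega) (by omega)
          rwa [hidx i (by omega), hidx j (by omega)] at this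
      have hq : qcost (a :: t) = n + qcost (t.filter (· < a)) + qcost (t.filter (· > a)) := by
        rw [qcost]
        simp only [List.head!_cons, List.tail_cons, List.length_cons]
        rw [dif_neg (by omega)]
        subst hl; rfl
      have ihrec := ih (n-1) (by omega) t htlen (by omega) hextt
      have harith := tri_step n (by omega)
      rcases hext 0 (by omega) with h | h
      · have hall : ∀ x ∈ t, a < x := by
          intro x hx
          rcases List.mem_iff_getElem.mp hx with ⟨i, hi, rfl⟩
          have := h (i+1) (by omega) (by omega)
          rw [h1, getElem!_pos (a :: t) (i+1) (hlt i hi)] at this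
          simpa using this
        have e1 : t.filter (· < a) = [] := by
          apply List.filter_eq_nil_iff.mpr
          intro x hx; simp; exact le_of_lt (hall x hx)
        have e2 : t.filter (· > a) = t := by
          apply List.filter_eq_self.mpr
          intro x hx; simp; exact hall x hx
        rw [hq, e1, e2, qcost_nil, ihrec]
        omega
      · have hall : ∀ x ∈ t, x < a := by
          intro x hx
          rcases List.mem_iff_getElem.mp hx with ⟨i, hi, rfl⟩
          have := h (i+1) (by omega) (by omega)
          rw [h1, getElem!_pos (a :: t) (i+1) (hlt i hi)] at this
          simpa using this
        have e1 : t.filter (· > a) = [] := by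
          apply List.filter_eq_nil_iff.mpr
          intro x hx; simp; exact le_of_lt (hall x hx)
        have e2 : t.filter (· < a) = t := by
          apply List.filter_eq_self.mpr
          intro x hx; simp; exact hall x hx
        rw [hq, e1, e2, qcost_nil, ihrec]
        omega


/-- If every element of `l` is either strictly less than all later elements or
strictly greater than all later elements, then `l` is a worst case for simple
QuickSort: its cost is exactly `n*(n+1)/2 - 1`. -/
theorem qcost_of_extremal (l : List ℤ) (n : ℕ) (hl : l.length = n) (hn : 1 ≤ n)
    (hext : ∀ i < n, (∀ j, i < j → j < n → l[i]! < l[j]!) ∨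
                     (∀ j, i < j → j < n → l[j]! < l[i]!)) :
    qcost l = n * (n + 1) / 2 - 1 := by
  exact qcost_aux n l hl hn hext
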